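/- Let ℓ be a 2-dimensional real subspace of ℂ³ ⊂ ℝ⁷. Then the 3-dimensional subspace ℝe₁ ⊕ ℓ of ℝ⁷ admits an orthonormal basis (w₁, w₂, w₃) with φ₀(w₁, w₂, w₃) = 1 (i.e. is an associative 3-plane) if and only if ℓ is a complex line, i.e. iℓ = ℓ. -/

import Mathlib

open scoped RealInnerProductSpace

noncomputable section

abbrev E7 : Type := EuclideanSpace ℝ (Fin 7)

/-- `dxⁱ ∧ dxʲ ∧ dxᵏ` evaluated on the triple `(u, v, w)`. -/
def triDet (u v w : E7) (i j k : Fin 7) : ℝ :=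
  Matrix.det !![u i, u j, u k; v i, v j, v k; w i, w j, w k]

/-- The standard G₂ 3-form `φ₀ = dx¹²³ + dx¹⁴⁵ + dx¹⁶⁷ + dx²⁴⁶ − dx²⁵⁷ − dx³⁴⁷ − dx³⁵⁶`
(here with 0-indexed coordinates). -/
def phi0 (u v w : E7) : ℝ :=
  triDet u v w 0 1 2 + triDet u v w 0 3 4 + triDet u v w 0 5 6 +
    triDet u v w 1 3 5 - triDet u v w 1 4 6 - triDet u v w 2 3 6 - triDet u v w 2 4 5

/-- `ℂ³` with its standard Hermitian inner product. -/
abbrev C3 : Type := EuclideanSpace ℂ (Fin 3)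

/-- The inclusion `ℂ³ ⊂ ℝ⁷ = ℝ ⊕ ℂ³` given by the complex coordinates
`z¹ = x² + ix³`, `z² = x⁴ + ix⁵`, `z³ = x⁶ + ix⁷` (0-indexed: `e₁` is index 0). -/
def toR7 (z : C3) : E7 :=
  (WithLp.equiv 2 (Fin 7 → ℝ)).symm
    ![0, (z 0).re, (z 0).im, (z 1).re, (z 1).im, (z 2).re, (z 2).im]

/-- The basis vector `e₁` spanning the `ℝ` factor of `ℝ⁷ = ℝ ⊕ ℂ³`. -/
def E1 : E7 := EuclideanSpace.single 0 1

/-- The standard Kähler form `ω₀(u, v) = g₀(iu, v)` on `ℂ³`, `g₀ = Re⟨·,·⟩`. -/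
def omegaC3 (u v : C3) : ℝ := (inner ℂ (Complex.I • u) v : ℂ).re

/-- The standard complex volume form `Ω₀ = dz¹∧dz²∧dz³` on `ℂ³`: the determinant of
the complex 3×3 matrix with columns `v₁, v₂, v₃`. -/
def OmegaC3 (v₁ v₂ v₃ : C3) : ℂ :=
  Matrix.det !![v₁ 0, v₂ 0, v₃ 0; v₁ 1, v₂ 1, v₃ 1; v₁ 2, v₂ 2, v₃ 2]

/-- A 3-dimensional subspace of `ℝ⁷` is an associative 3-plane if it admits an
orthonormal basis `(w₁, w₂, w₃)` with `φ₀(w₁, w₂, w₃) = 1`. -/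
def IsAssociativePlane (π : Submodule ℝ E7) : Prop :=
  ∃ w₁ w₂ w₃ : E7, ‖w₁‖ = 1 ∧ ‖w₂‖ = 1 ∧ ‖w₃‖ = 1 ∧
    ⟪w₁, w₂⟫ = 0 ∧ ⟪w₁, w₃⟫ = 0 ∧ ⟪w₂, w₃⟫ = 0 ∧
    Submodule.span ℝ ({w₁, w₂, w₃} : Set E7) = π ∧ phi0 w₁ w₂ w₃ = 1

/-- Multiplication by `i` on `ℂ³` as an `ℝ`-linear map. -/
def mulI : C3 →ₗ[ℝ] C3 :=
  LinearMap.restrictScalars ℝ (Complex.I • (LinearMap.id : C3 →ₗ[ℂ] C3))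

/-! ### Auxiliary lemmas -/

lemma toR7_c0 (z : C3) : toR7 z 0 = 0 := rfl
lemma toR7_c1 (z : C3) : toR7 z 1 = (z 0).re := rfl
lemma toR7_c2 (z : C3) : toR7 z 2 = (z 0).im := rfl
lemma toR7_c3 (z : C3) : toR7 z 3 = (z 1).re := rfl
lemma toR7_c4 (z : C3) : toR7 z 4 = (z 1).im := rfl
lemma toR7_c5 (z : C3) : toR7 z 5 = (z 2).re := rfl
lemma toR7_c6 (z : C3) : toR7 z 6 = (z 2).im := rfl

/-- `toR7` as an `ℝ`-linear map. -/
def toR7L : C3 →ₗ[ℝ] E7 where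
  toFun := toR7
  map_add' a b := by
    unfold toR7
    show WithLp.toLp 2 _ = WithLp.toLp 2 _ + WithLp.toLp 2 _
    rw [← WithLp.toLp_add]
    congr 1
    have h : ∀ j : Fin 3, (a + b) j = a j + b j := fun j => rfl
    simp [Matrix.cons_add_cons, h, Complex.add_re, Complex.add_im]
  map_smul' c a := by
    simp only [RingHom.id_apply]
    unfold toR7
    show WithLp.toLp 2 _ = c • WithLp.toLp 2 _
    rw [← WithLp.toLp_smul]
    congr 1
    have h : ∀ j : Fin 3, (c • a) j = (c : ℂ) • a j := fun j => rfl
    simp [Matrix.smul_cons, h, Complex.real_smul, Complex.mul_re, Complex.mul_im]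

lemma toR7L_apply (z : C3) : toR7L z = toR7 z := rfl

lemma real_inner_C3 (a b : C3) : ⟪a, b⟫ = (inner ℂ a b : ℂ).re := by
  simp [PiLp.inner_apply, Fin.sum_univ_three, Complex.add_re]

lemma inner_toR7 (a b : C3) : ⟪toR7 a, toR7 b⟫ = ⟪a, b⟫ := by
  simp [PiLp.inner_apply, Fin.sum_univ_seven, Fin.sum_univ_three, toR7_c0, toR7_c1,
    toR7_c2, toR7_c3, toR7_c4, toR7_c5, toR7_c6,
    RCLike.inner_apply, Complex.mul_re, Complex.conj_re, Complex.conj_im]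
  ring

lemma norm_toR7 (a : C3) : ‖toR7 a‖ = ‖a‖ := by
  have h := inner_toR7 a a
  rw [real_inner_self_eq_norm_sq, real_inner_self_eq_norm_sq] at h
  nlinarith [norm_nonneg (toR7 a), norm_nonneg a]

lemma inner_E1_toR7 (a : C3) : ⟪E1, toR7 a⟫ = 0 := by
  simp [PiLp.inner_apply, Fin.sum_univ_seven, toR7_c0, toR7_c1, toR7_c2, toR7_c3, toR7_c4,
    toR7_c5, toR7_c6, E1, EuclideanSpace.single_apply]

lemma norm_E1 : ‖E1‖ = 1 := by simp [E1]

lemma phi0_E1 (a b : C3) : phi0 E1 (toR7 a) (toR7 b) = omegaC3 a b := by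
  have hsa : ∀ i : Fin 3, (Complex.I • a) i = Complex.I * a i := fun _ => rfl
  have hE0 : E1 0 = 1 := by simp [E1, EuclideanSpace.single_apply]
  have hE : ∀ i : Fin 7, i ≠ 0 → E1 i = 0 := by
    intro i hi; simp [E1, EuclideanSpace.single_apply, hi]
  unfold phi0 triDet omegaC3
  rw [hE0, hE 1 (by decide), hE 2 (by decide), hE 3 (by decide), hE 4 (by decide),
    hE 5 (by decide), hE 6 (by decide)]
  simp [Matrix.det_fin_three, PiLp.inner_apply, Fin.sum_univ_three, RCLike.inner_apply,
    hsa, toR7_c0, toR7_c1, toR7_c2, toR7_c3, toR7_c4, toR7_c5, toR7_c6,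
    Complex.mul_re, Complex.mul_im, Complex.conj_re, Complex.conj_im]
  ring

lemma triDet_eval (u v w : E7) (i j k : Fin 7) :
    triDet u v w i j k = u i * (v j * w k - v k * w j) - u j * (v i * w k - v k * w i)
      + u k * (v i * w j - v j * w i) := by
  simp [triDet, Matrix.det_fin_three, Matrix.cons_val_zero, Matrix.cons_val_one,
    Matrix.head_cons, Matrix.cons_val_two, Matrix.tail_cons]
  ring

set_option maxHeartbeats 2000000 in
lemma phi0_expand (a1 b1 c1 a2 b2 c2 a3 b3 c3 : ℝ) (x y z : E7) :
    phi0 (a1•x + (b1•y + c1•z)) (a2•x + (b2•y + c2•z)) (a3•x + (b3•y + c3•z)) =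
      (a1*(b2*c3 - c2*b3) - b1*(a2*c3 - c2*a3) + c1*(a2*b3 - b2*a3)) * phi0 x y z := by
  unfold phi0
  simp only [triDet_eval, PiLp.add_apply, PiLp.smul_apply, smul_eq_mul]
  ring

lemma inner_comb (a1 b1 c1 a2 b2 c2 : ℝ) (x y z : E7) (hx : ‖x‖ = 1) (hy : ‖y‖ = 1)
    (hz : ‖z‖ = 1) (hxy : ⟪x,y⟫ = 0) (hxz : ⟪x,z⟫ = 0) (hyz : ⟪y,z⟫ = 0) :
    ⟪a1•x + (b1•y + c1•z), a2•x + (b2•y + c2•z)⟫ = a1*a2 + b1*b2 + c1*c2 := by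
  have hyx : ⟪y,x⟫ = 0 := by rw [real_inner_comm]; exact hxy
  have hzx : ⟪z,x⟫ = 0 := by rw [real_inner_comm]; exact hxz
  have hzy : ⟪z,y⟫ = 0 := by rw [real_inner_comm]; exact hyz
  simp only [inner_add_left, inner_add_right, real_inner_smul_left, real_inner_smul_right,
    hxy, hxz, hyz, hyx, hzx, hzy, real_inner_self_eq_norm_mul_norm, hx, hy, hz]
  ring

lemma span_lemma (ℓ : Submodule ℝ C3) (u v : C3) (hl : ℓ = Submodule.span ℝ {u, v}) :
    Submodule.span ℝ (insert E1 (toR7 '' (ℓ : Set C3))) =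
      Submodule.span ℝ ({E1, toR7 u, toR7 v} : Set E7) := by
  have h1 : toR7 '' (ℓ : Set C3) = ((Submodule.map toR7L ℓ : Submodule ℝ E7) : Set E7) := rfl
  rw [Submodule.span_insert, h1, Submodule.span_eq, hl, Submodule.map_span,
    Set.image_insert_eq, Set.image_singleton, toR7L_apply, toR7L_apply,
    ← Submodule.span_insert]

lemma mulI_apply (z : C3) : mulI z = Complex.I • z := rfl

lemma map_mulI_span_pair (u : C3) :
    Submodule.map mulI (Submodule.span ℝ {u, Complex.I • u}) =
      Submodule.span ℝ {u, Complex.I • u} := by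
  rw [Submodule.map_span, Set.image_insert_eq, Set.image_singleton, mulI_apply, mulI_apply]
  have h2 : Complex.I • Complex.I • u = -u := by
    rw [smul_smul, Complex.I_mul_I, neg_one_smul]
  rw [h2]
  apply le_antisymm
  · rw [Submodule.span_le, Set.insert_subset_iff, Set.singleton_subset_iff]
    exact ⟨Submodule.subset_span (by simp),
      Submodule.neg_mem _ (Submodule.subset_span (by simp))⟩
  · rw [Submodule.span_le, Set.insert_subset_iff, Set.singleton_subset_iff]
    constructor
    · have := Submodule.neg_mem (Submodule.span ℝ ({Complex.I • u, -u} : Set C3))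
        (Submodule.subset_span (show -u ∈ ({Complex.I • u, -u} : Set C3) by simp))
      simpa using this
    · exact Submodule.subset_span (by simp)

lemma span_pair_neg_right (x y : C3) :
    Submodule.span ℝ ({x, -y} : Set C3) = Submodule.span ℝ ({x, y} : Set C3) := by
  rw [Submodule.span_insert, Submodule.span_insert x {y}]
  congr 1
  rw [← Set.neg_singleton, Submodule.span_neg]

/-- For a 2-dimensional real subspace `ℓ ⊆ ℂ³ ⊂ ℝ⁷`, the 3-plane `ℝe₁ ⊕ ℓ` is
associative if and only if `ℓ` is a complex line, i.e. `iℓ = ℓ`. -/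
theorem statement8 (ℓ : Submodule ℝ C3) (hdim : Module.finrank ℝ ℓ = 2) :
    IsAssociativePlane (Submodule.span ℝ (insert E1 (toR7 '' (ℓ : Set C3)))) ↔
      Submodule.map mulI ℓ = ℓ := by
  constructor
  · rintro ⟨w1, w2, w3, n1, n2, n3, o12, o13, o23, hsp, hphi⟩
    -- an orthonormal basis (u, v) of ℓ
    let B : OrthonormalBasis (Fin 2) ℝ ℓ := (stdOrthonormalBasis ℝ ℓ).reindex (finCongr hdim)
    set u : C3 := (B 0 : C3) with hu_def
    set v : C3 := (B 1 : C3) with hv_def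
    have hBon := B.orthonormal
    have hu : ‖u‖ = 1 := hBon.1 0
    have hv : ‖v‖ = 1 := hBon.1 1
    have huv : ⟪u, v⟫ = 0 := by
      have := hBon.2 (show (0 : Fin 2) ≠ 1 by decide)
      exact this
    have hlspan : ℓ = Submodule.span ℝ {u, v} := by
      have himg : (ℓ.subtype '' Set.range ⇑B.toBasis) = {u, v} := by
        rw [OrthonormalBasis.coe_toBasis]
        ext x
        simp [Fin.exists_fin_two, eq_comm]
        exact Iff.rfl
      calc ℓ = Submodule.map ℓ.subtype ⊤ := (Submodule.map_subtype_top ℓ).symm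
        _ = Submodule.map ℓ.subtype (Submodule.span ℝ (Set.range ⇑B.toBasis)) := by
              rw [B.toBasis.span_eq]
        _ = Submodule.span ℝ (ℓ.subtype '' Set.range ⇑B.toBasis) := Submodule.map_span _ _
        _ = Submodule.span ℝ {u, v} := by rw [himg]
    set U : E7 := toR7 u with hU_def
    set V : E7 := toR7 v with hV_def
    have hπ := span_lemma ℓ u v hlspan
    have hnU : ‖U‖ = 1 := by rw [hU_def, norm_toR7]; exact hu
    have hnV : ‖V‖ = 1 := by rw [hV_def, norm_toR7]; exact hv
    have hE1U : ⟪E1, U⟫ = 0 := inner_E1_toR7 u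
    have hE1V : ⟪E1, V⟫ = 0 := inner_E1_toR7 v
    have hUV : ⟪U, V⟫ = 0 := by rw [hU_def, hV_def, inner_toR7]; exact huv
    -- decompose the wᵢ
    have hm : ∀ w : E7, w ∈ ({w1, w2, w3} : Set E7) →
        w ∈ Submodule.span ℝ ({E1, U, V} : Set E7) := by
      intro w hw
      have h1 : w ∈ Submodule.span ℝ ({w1, w2, w3} : Set E7) := Submodule.subset_span hw
      rwa [hsp, hπ] at h1
    have dec : ∀ w : E7, w ∈ Submodule.span ℝ ({E1, U, V} : Set E7) →
        ∃ a b c : ℝ, w = a • E1 + (b • U + c • V) := by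
      intro w hw
      rw [Submodule.mem_span_insert] at hw
      obtain ⟨a, z, hz, hwz⟩ := hw
      rw [Submodule.mem_span_insert] at hz
      obtain ⟨b, z', hz', hze⟩ := hz
      rw [Submodule.mem_span_singleton] at hz'
      obtain ⟨c, rfl⟩ := hz'
      exact ⟨a, b, c, by rw [hwz, hze]⟩
    obtain ⟨a1, b1, c1, hw1⟩ := dec w1 (hm w1 (by simp))
    obtain ⟨a2, b2, c2, hw2⟩ := dec w2 (hm w2 (by simp))
    obtain ⟨a3, b3, c3, hw3⟩ := dec w3 (hm w3 (by simp))
    -- orthonormality relations for the coefficient matrix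
    have e11 := inner_comb a1 b1 c1 a1 b1 c1 E1 U V norm_E1 hnU hnV hE1U hE1V hUV
    have e22 := inner_comb a2 b2 c2 a2 b2 c2 E1 U V norm_E1 hnU hnV hE1U hE1V hUV
    have e33 := inner_comb a3 b3 c3 a3 b3 c3 E1 U V norm_E1 hnU hnV hE1U hE1V hUV
    have e12 := inner_comb a1 b1 c1 a2 b2 c2 E1 U V norm_E1 hnU hnV hE1U hE1V hUV
    have e13 := inner_comb a1 b1 c1 a3 b3 c3 E1 U V norm_E1 hnU hnV hE1U hE1V hUV
    have e23 := inner_comb a2 b2 c2 a3 b3 c3 E1 U V norm_E1 hnU hnV hE1U hE1V hUV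
    rw [← hw1] at e11 e12 e13
    rw [← hw2] at e12 e22 e23
    rw [← hw3] at e13 e23 e33
    rw [real_inner_self_eq_norm_mul_norm, n1] at e11
    rw [real_inner_self_eq_norm_mul_norm, n2] at e22
    rw [real_inner_self_eq_norm_mul_norm, n3] at e33
    rw [o12] at e12
    rw [o13] at e13
    rw [o23] at e23
    have r11 : a1*a1 + b1*b1 + c1*c1 = 1 := by rw [← e11]; norm_num
    have r22 : a2*a2 + b2*b2 + c2*c2 = 1 := by rw [← e22]; norm_num
    have r33 : a3*a3 + b3*b3 + c3*c3 = 1 := by rw [← e33]; norm_num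
    have r12 : a1*a2 + b1*b2 + c1*c2 = 0 := e12.symm
    have r13 : a1*a3 + b1*b3 + c1*c3 = 0 := e13.symm
    have r23 : a2*a3 + b2*b3 + c2*c3 = 0 := e23.symm
    set d : ℝ := a1*(b2*c3 - c2*b3) - b1*(a2*c3 - c2*a3) + c1*(a2*b3 - b2*a3) with hd_def
    have hdd : d * d = 1 := by
      have hgram : d * d =
          (a1*a1 + b1*b1 + c1*c1) *
            ((a2*a2 + b2*b2 + c2*c2) * (a3*a3 + b3*b3 + c3*c3)
              - (a2*a3 + b2*b3 + c2*c3) * (a2*a3 + b2*b3 + c2*c3))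
          - (a1*a2 + b1*b2 + c1*c2) *
            ((a1*a2 + b1*b2 + c1*c2) * (a3*a3 + b3*b3 + c3*c3)
              - (a2*a3 + b2*b3 + c2*c3) * (a1*a3 + b1*b3 + c1*c3))
          + (a1*a3 + b1*b3 + c1*c3) *
            ((a1*a2 + b1*b2 + c1*c2) * (a2*a3 + b2*b3 + c2*c3)
              - (a2*a2 + b2*b2 + c2*c2) * (a1*a3 + b1*b3 + c1*c3)) := by
        rw [hd_def]; ring
      rw [r11, r22, r33, r12, r13, r23] at hgram
      rw [hgram]; norm_num
    -- the value of phi0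
    have hexp := phi0_expand a1 b1 c1 a2 b2 c2 a3 b3 c3 E1 U V
    rw [← hw1, ← hw2, ← hw3, hphi] at hexp
    have hph : phi0 E1 U V = ⟪(Complex.I • u : C3), v⟫ := by
      rw [hU_def, hV_def, phi0_E1, real_inner_C3]; rfl
    set t : ℝ := ⟪(Complex.I • u : C3), v⟫ with ht_def
    have hdt : d * t = 1 := by rw [← hph, hd_def]; exact hexp.symm
    have ht : t = d := by linear_combination d * hdt - t * hdd
    have hnu : ‖(Complex.I • u : C3)‖ = 1 := by
      rw [norm_smul]; simp [Complex.norm_I, hu]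
    rcases mul_self_eq_one_iff.mp hdd with h1 | h1
    · -- t = 1, so v = i • u
      have ht1 : t = 1 := by rw [ht, h1]
      have hveq : Complex.I • u = v :=
        (inner_eq_one_iff_of_norm_eq_one hnu hv).mp ht1
      rw [hlspan, ← hveq]
      exact map_mulI_span_pair u
    · -- t = -1, so v = -(i • u)
      have ht1 : t = -1 := by rw [ht, h1]
      have hinn : ⟪(Complex.I • u : C3), -v⟫ = 1 := by
        have h2 : ⟪(Complex.I • u : C3), v⟫ = -1 := ht1
        rw [inner_neg_right, h2]
        norm_num
      have hveq : Complex.I • u = -v :=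
        (inner_eq_one_iff_of_norm_eq_one hnu (by rw [norm_neg]; exact hv)).mp hinn
      have hv' : v = -(Complex.I • u) := by rw [hveq, neg_neg]
      rw [hlspan, hv', span_pair_neg_right]
      exact map_mulI_span_pair u
  · intro hmap
    have hne : ℓ ≠ ⊥ := by
      intro h
      rw [h, finrank_bot] at hdim
      norm_num at hdim
    obtain ⟨x, hx, hx0⟩ := (Submodule.ne_bot_iff ℓ).mp hne
    set u : C3 := (‖x‖⁻¹ : ℝ) • x with hudef
    have hu : ‖u‖ = 1 := norm_smul_inv_norm hx0
    have hu_mem : u ∈ ℓ := ℓ.smul_mem _ hx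
    have hiu_mem : Complex.I • u ∈ ℓ := by
      rw [← hmap]
      exact ⟨u, hu_mem, rfl⟩
    have hnu : ‖(Complex.I • u : C3)‖ = 1 := by
      rw [norm_smul]; simp [Complex.norm_I, hu]
    have hinner : ⟪u, (Complex.I • u : C3)⟫ = 0 := by
      rw [real_inner_C3, inner_smul_right, inner_self_eq_norm_sq_to_K]
      simp [Complex.mul_re, ← Complex.ofReal_pow]
    have hpair : Orthonormal ℝ ![u, Complex.I • u] := by
      constructor
      · intro i
        fin_cases i
        · simpa using hu
        · simpa using hnu
      · intro i j hij
        fin_cases i <;> fin_cases j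
        · exact absurd rfl hij
        · simpa using hinner
        · simpa [real_inner_comm] using hinner
        · exact absurd rfl hij
    have hrange : Set.range ![u, Complex.I • u] = {u, Complex.I • u} := by
      ext w
      simp [Fin.exists_fin_two, eq_comm, or_comm]
    have hsp2 : Submodule.span ℝ ({u, Complex.I • u} : Set C3) = ℓ := by
      apply Submodule.eq_of_le_of_finrank_le
      · rw [Submodule.span_le, Set.insert_subset_iff, Set.singleton_subset_iff]
        exact ⟨hu_mem, hiu_mem⟩
      · rw [hdim, ← hrange, finrank_span_eq_card hpair.linearIndependent]
        simp
    refine ⟨E1, toR7 u, toR7 (Complex.I • u), norm_E1, by rw [norm_toR7]; exact hu,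
      by rw [norm_toR7]; exact hnu, inner_E1_toR7 u, inner_E1_toR7 _,
      by rw [inner_toR7]; exact hinner, ?_, ?_⟩
    · rw [span_lemma ℓ u (Complex.I • u) hsp2.symm]
    · rw [phi0_E1]
      unfold omegaC3
      rw [inner_self_eq_norm_sq_to_K, hnu]
      norm_num
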